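/- arXiv:2208.12022 — 2 statements merged into one kernel-verified Lean document; each statement's English description precedes it below -/
import Mathlib

section
/- Lyapunov multi-function induction inequality: Let A_1,…,A_M ∈ ℝ^{n×n}, G = (S,E,p) a stochastic graph on ⟨M⟩, ρ ≥ 0, and F = {f_a : a ∈ S} a family of continuous, positive definite, positively homogeneous functions ℝⁿ → ℝ satisfying ∏_{i∈⟨M⟩} ∏_{b∈S} f_b(A_i x)^{p_{a,b,i}} ≤ ρ f_a(x) for all x ∈ ℝⁿ and a ∈ S. Then for every k ∈ ℕ, every initial distribution ξ on S, and every x ∈ ℝⁿ: ∏_{s∈S} ∏_{ĵ∈⟨M⟩^k} f_s(A(ĵ)x)^{ℙ_{G,ξ}(s,ĵ)} ≤ ρ^k ∏_{s∈S} f_s(x)^{ξ(s)}, where A(ĵ) = A_{j_{k-1}} ⋯ A_{j_0}. -/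
/-- `ℙ_{G,ξ}(s, w)`. -/
noncomputable def PP {S ι : Type*} [Fintype S] (p : S → S → ι → ℝ) (ξ : S → ℝ) :
    (k : ℕ) → S → (Fin k → ι) → ℝ
  | 0, s, _ => ξ s
  | k + 1, s, w => ∑ a, PP p ξ k a (Fin.init w) * p a s (w (Fin.last k))

/-- `A(w) = A_{w_{k-1}} ⋯ A_{w_0}` (letter at index 0 acts first). -/
noncomputable def Aw {ι : Type*} {n : ℕ} (A : ι → Matrix (Fin n) (Fin n) ℝ) :
    (k : ℕ) → (Fin k → ι) → Matrix (Fin n) (Fin n) ℝ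
  | 0, _ => 1
  | k + 1, w => A (w (Fin.last k)) * Aw A k (Fin.init w)

private lemma PP_nonneg {S ι : Type*} [Fintype S] {p : S → S → ι → ℝ} {ξ : S → ℝ}
    (hp : ∀ a b i, 0 ≤ p a b i) (hξ : ∀ s, 0 ≤ ξ s) :
    ∀ (k : ℕ) (s : S) (w : Fin k → ι), 0 ≤ PP p ξ k s w
  | 0, s, _ => hξ s
  | k + 1, s, w => Finset.sum_nonneg fun a _ =>
      mul_nonneg (PP_nonneg hp hξ k a _) (hp a s _)

private lemma snoc_prod {ι M' : Type*} [Fintype ι] [CommMonoid M'] {k : ℕ}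
    (F : (Fin (k + 1) → ι) → M') :
    ∏ w : Fin (k + 1) → ι, F w = ∏ w' : Fin k → ι, ∏ i : ι, F (Fin.snoc w' i) := by
  rw [← (Fin.snocEquiv (fun _ => ι)).prod_comp F, Fintype.prod_prod_type, Finset.prod_comm]
  simp [Fin.snocEquiv]

private lemma snoc_sum {ι : Type*} [Fintype ι] {k : ℕ} (F : (Fin (k + 1) → ι) → ℝ) :
    ∑ w : Fin (k + 1) → ι, F w = ∑ w' : Fin k → ι, ∑ i : ι, F (Fin.snoc w' i) := by
  rw [← (Fin.snocEquiv (fun _ => ι)).sum_comp F, Fintype.sum_prod_type, Finset.sum_comm]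
  simp [Fin.snocEquiv]

private lemma PP_sum {S ι : Type*} [Fintype S] [Fintype ι] {p : S → S → ι → ℝ} {ξ : S → ℝ}
    (hp : ∀ a : S, ∑ b : S, ∑ i : ι, p a b i = 1) (hξ : ∑ s : S, ξ s = 1) (k : ℕ) :
    ∑ w : Fin k → ι, ∑ s : S, PP p ξ k s w = 1 := by
  induction k with
  | zero => simpa [PP] using hξ
  | succ k ih =>
    rw [snoc_sum]
    have : ∀ w' : Fin k → ι, ∑ i : ι, ∑ s : S, PP p ξ (k + 1) s (Fin.snoc w' i)
        = ∑ a, PP p ξ k a w' := by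
      intro w'
      have h1 : ∀ i s, PP p ξ (k + 1) s (Fin.snoc w' i) = ∑ a, PP p ξ k a w' * p a s i := by
        intro i s
        simp [PP, Fin.init_snoc, Fin.snoc_last]
      simp only [h1]
      calc ∑ i : ι, ∑ s : S, ∑ a, PP p ξ k a w' * p a s i
          = ∑ i : ι, ∑ a, ∑ s : S, PP p ξ k a w' * p a s i :=
            Finset.sum_congr rfl fun i _ => Finset.sum_comm
        _ = ∑ a, ∑ i : ι, ∑ s : S, PP p ξ k a w' * p a s i := Finset.sum_comm
        _ = ∑ a, ∑ s : S, ∑ i : ι, PP p ξ k a w' * p a s i :=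
            Finset.sum_congr rfl fun a _ => Finset.sum_comm
        _ = ∑ a, PP p ξ k a w' * (∑ s : S, ∑ i : ι, p a s i) := by
            simp [Finset.mul_sum]
        _ = ∑ a, PP p ξ k a w' := by
            refine Finset.sum_congr rfl fun a _ => ?_
            rw [hp a, mul_one]
    rw [Finset.sum_congr rfl fun w' _ => this w']
    exact ih

/-- Lyapunov multi-function induction inequality.  Here `x ^ r`
for real `r` denotes `Real.rpow` (so `0 ^ 0 = 1`). -/
theorem LMF_induction
    {S : Type*} [Fintype S] (M n : ℕ)
    (A : Fin M → Matrix (Fin n) (Fin n) ℝ)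
    (p : S → S → Fin M → ℝ)
    (hnonneg : ∀ a b i, 0 ≤ p a b i)
    (hstoch : ∀ a : S, ∑ b : S, ∑ i : Fin M, p a b i = 1)
    (ρ : ℝ) (hρ : 0 ≤ ρ)
    (f : S → (Fin n → ℝ) → ℝ)
    (hcont : ∀ a, Continuous (f a))
    (hpos : ∀ a x, x ≠ 0 → 0 < f a x) (hzero : ∀ a, f a 0 = 0)
    (hhom : ∀ a (c : ℝ) x, 0 ≤ c → f a (c • x) = c * f a x)
    (hLMF : ∀ (a : S) (x : Fin n → ℝ),
      ∏ i : Fin M, ∏ b : S, f b ((A i).mulVec x) ^ p a b i ≤ ρ * f a x)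
    (ξ : S → ℝ) (hξ0 : ∀ s, 0 ≤ ξ s) (hξ1 : ∑ s : S, ξ s = 1)
    (k : ℕ) (x : Fin n → ℝ) :
    ∏ s : S, ∏ w : Fin k → Fin M, f s ((Aw A k w).mulVec x) ^ PP p ξ k s w
      ≤ ρ ^ k * ∏ s : S, f s x ^ ξ s := by
  have hf0 : ∀ a (y : Fin n → ℝ), 0 ≤ f a y := by
    intro a y
    rcases eq_or_ne y 0 with h | h
    · rw [h, hzero]
    · exact (hpos a y h).le
  have hPPn := PP_nonneg (p := p) (ξ := ξ) hnonneg hξ0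
  induction k with
  | zero =>
    simp only [pow_zero, one_mul]
    apply le_of_eq
    have : ∀ s : S, ∏ w : Fin 0 → Fin M, f s ((Aw A 0 w).mulVec x) ^ PP p ξ 0 s w
        = f s x ^ ξ s := by
      intro s
      rw [Fintype.prod_unique]
      simp [Aw, PP, Matrix.one_mulVec]
    exact Finset.prod_congr rfl fun s _ => this s
  | succ k ih =>
    -- The key single-step inequality.
    have key : ∀ (y : Fin n → ℝ) (q : S → ℝ), (∀ a, 0 ≤ q a) →
        ∏ i : Fin M, ∏ s : S, f s ((A i).mulVec y) ^ (∑ a, q a * p a s i)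
          ≤ ρ ^ (∑ a, q a) * ∏ a, f a y ^ q a := by
      intro y q hq
      calc ∏ i : Fin M, ∏ s : S, f s ((A i).mulVec y) ^ (∑ a, q a * p a s i)
          = ∏ i : Fin M, ∏ s : S, ∏ a, (f s ((A i).mulVec y) ^ p a s i) ^ q a := by
            refine Finset.prod_congr rfl fun i _ => Finset.prod_congr rfl fun s _ => ?_
            rw [Real.rpow_sum_of_nonneg (hf0 _ _)
              (fun a _ => mul_nonneg (hq a) (hnonneg a s i))]
            refine Finset.prod_congr rfl fun a _ => ?_
            rw [mul_comm, Real.rpow_mul (hf0 _ _)]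
        _ = ∏ a, ∏ i : Fin M, ∏ s : S, (f s ((A i).mulVec y) ^ p a s i) ^ q a := by
            rw [show (∏ i : Fin M, ∏ s : S, ∏ a, (f s ((A i).mulVec y) ^ p a s i) ^ q a)
                = ∏ i : Fin M, ∏ a, ∏ s : S, (f s ((A i).mulVec y) ^ p a s i) ^ q a from
              Finset.prod_congr rfl fun i _ => Finset.prod_comm, Finset.prod_comm]
        _ = ∏ a, (∏ i : Fin M, ∏ s : S, f s ((A i).mulVec y) ^ p a s i) ^ q a := by
            refine Finset.prod_congr rfl fun a _ => ?_
            rw [show (∏ i : Fin M, ∏ s : S, (f s ((A i).mulVec y) ^ p a s i) ^ q a)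
                = ∏ i : Fin M, (∏ s : S, f s ((A i).mulVec y) ^ p a s i) ^ q a from
              Finset.prod_congr rfl fun i _ => Real.finset_prod_rpow _ _
                (fun s _ => Real.rpow_nonneg (hf0 _ _) _) _]
            exact Real.finset_prod_rpow _ _
              (fun i _ => Finset.prod_nonneg fun s _ => Real.rpow_nonneg (hf0 _ _) _) _
        _ ≤ ∏ a, (ρ * f a y) ^ q a := by
            refine Finset.prod_le_prod (fun a _ => Real.rpow_nonneg ?_ _)
              (fun a _ => Real.rpow_le_rpow ?_ (hLMF a y) (hq a))
            all_goals exact Finset.prod_nonneg fun i _ =>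
              Finset.prod_nonneg fun s _ => Real.rpow_nonneg (hf0 _ _) _
        _ = ρ ^ (∑ a, q a) * ∏ a, f a y ^ q a := by
            rw [Real.rpow_sum_of_nonneg hρ (fun a _ => hq a), ← Finset.prod_mul_distrib]
            exact Finset.prod_congr rfl fun a _ => Real.mul_rpow hρ (hf0 _ _)
    set y : (Fin k → Fin M) → (Fin n → ℝ) := fun w' => (Aw A k w').mulVec x with hy
    have hsnoc : ∀ (w' : Fin k → Fin M) (i : Fin M) (s : S),
        f s ((Aw A (k + 1) (Fin.snoc w' i)).mulVec x) ^ PP p ξ (k + 1) s (Fin.snoc w' i)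
          = f s ((A i).mulVec (y w')) ^ (∑ a, PP p ξ k a w' * p a s i) := by
      intro w' i s
      have h1 : Aw A (k + 1) (Fin.snoc w' i) = A i * Aw A k w' := by
        simp [Aw, Fin.init_snoc, Fin.snoc_last]
      have h2 : PP p ξ (k + 1) s (Fin.snoc w' i) = ∑ a, PP p ξ k a w' * p a s i := by
        simp [PP, Fin.init_snoc, Fin.snoc_last]
      rw [h1, h2, ← Matrix.mulVec_mulVec]
    calc ∏ s : S, ∏ w : Fin (k + 1) → Fin M,
          f s ((Aw A (k + 1) w).mulVec x) ^ PP p ξ (k + 1) s w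
        = ∏ w' : Fin k → Fin M, ∏ i : Fin M, ∏ s : S,
            f s ((A i).mulVec (y w')) ^ (∑ a, PP p ξ k a w' * p a s i) := by
          rw [Finset.prod_comm, snoc_prod
            (fun w => ∏ s : S, f s ((Aw A (k + 1) w).mulVec x) ^ PP p ξ (k + 1) s w)]
          refine Finset.prod_congr rfl fun w' _ => Finset.prod_congr rfl fun i _ => ?_
          exact Finset.prod_congr rfl fun s _ => hsnoc w' i s
      _ ≤ ∏ w' : Fin k → Fin M,
            (ρ ^ (∑ a, PP p ξ k a w') * ∏ a, f a (y w') ^ PP p ξ k a w') := by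
          refine Finset.prod_le_prod (fun w' _ => ?_)
            (fun w' _ => key (y w') (fun a => PP p ξ k a w') (fun a => hPPn k a w'))
          exact Finset.prod_nonneg fun i _ =>
            Finset.prod_nonneg fun s _ => Real.rpow_nonneg (hf0 _ _) _
      _ = ρ ^ ((∑ w' : Fin k → Fin M, ∑ a, PP p ξ k a w'))
            * ∏ w' : Fin k → Fin M, ∏ a, f a (y w') ^ PP p ξ k a w' := by
          rw [Finset.prod_mul_distrib,
            Real.rpow_sum_of_nonneg hρ
              (fun w' _ => Finset.sum_nonneg fun a _ => hPPn k a w')]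
      _ = ρ * ∏ s : S, ∏ w' : Fin k → Fin M, f s ((Aw A k w').mulVec x) ^ PP p ξ k s w' := by
          rw [PP_sum hstoch hξ1 k, Real.rpow_one, Finset.prod_comm]
      _ ≤ ρ * (ρ ^ k * ∏ s : S, f s x ^ ξ s) := mul_le_mul_of_nonneg_left ih hρ
      _ = ρ ^ (k + 1) * ∏ s : S, f s x ^ ξ s := by ring
end

section
/- Let A_1,…,A_M ∈ ℝ^{n×n}, G a stochastic graph, and F = {f_a} a Lyapunov multi-function for (A,G) with respect to ρ, i.e., ∏_{i,b} f_b(A_i x)^{p_{a,b,i}} ≤ ρ f_a(x) for all x, a. Then for every K ≥ 1 the same family F is a Lyapunov multi-function for the K-step lift with respect to ρ^K: ∏_{î∈⟨M⟩^K} ∏_{b∈S} f_b(A(î)x)^{p^K_{a,b,î}} ≤ ρ^K f_a(x) for all x ∈ ℝⁿ and a ∈ S. -/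
/-- K-step lift weights. -/
noncomputable def pK {S ι : Type*} [Fintype S] [DecidableEq S] (p : S → S → ι → ℝ) :
    (K : ℕ) → S → S → (Fin K → ι) → ℝ
  | 0, a, b, _ => if a = b then 1 else 0
  | K + 1, a, b, w => ∑ c, pK p K a c (Fin.init w) * p c b (w (Fin.last K))

lemma pK_nonneg {S ι : Type*} [Fintype S] [DecidableEq S] {p : S → S → ι → ℝ}
    (hp : ∀ a b i, 0 ≤ p a b i) :
    ∀ (K : ℕ) (a b : S) (w : Fin K → ι), 0 ≤ pK p K a b w
  | 0, a, b, w => by unfold pK; split_ifs <;> norm_num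
  | K + 1, a, b, w => Finset.sum_nonneg fun c _ =>
      mul_nonneg (pK_nonneg hp K a c _) (hp c b _)

lemma pK_sum {S ι : Type*} [Fintype S] [DecidableEq S] [Fintype ι] {p : S → S → ι → ℝ}
    (hstoch : ∀ a : S, ∑ b : S, ∑ i : ι, p a b i = 1) :
    ∀ (K : ℕ) (a : S), ∑ w : Fin K → ι, ∑ b : S, pK p K a b w = 1 := by
  intro K
  induction K with
  | zero =>
    intro a
    simp [pK]
  | succ K ih =>
    intro a
    rw [← Equiv.sum_comp (Fin.snocEquiv (fun _ => ι))
      (fun w => ∑ b : S, pK p (K+1) a b w)]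
    rw [Fintype.sum_prod_type]
    calc ∑ i : ι, ∑ v : Fin K → ι, ∑ b : S,
            pK p (K+1) a b (Fin.snocEquiv (fun _ => ι) (i, v))
        = ∑ i : ι, ∑ v : Fin K → ι, ∑ b : S, ∑ c : S,
            pK p K a c v * p c b i := by
          simp [pK, Fin.snocEquiv, Fin.init_snoc, Fin.snoc_last]
      _ = ∑ v : Fin K → ι, ∑ i : ι, ∑ b : S, ∑ c : S,
            pK p K a c v * p c b i := Finset.sum_comm
      _ = ∑ v : Fin K → ι, ∑ c : S, pK p K a c v * (∑ i : ι, ∑ b : S, p c b i) := by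
          refine Finset.sum_congr rfl fun v _ => ?_
          calc ∑ i : ι, ∑ b : S, ∑ c : S, pK p K a c v * p c b i
              = ∑ i : ι, ∑ c : S, ∑ b : S, pK p K a c v * p c b i :=
                Finset.sum_congr rfl fun i _ => Finset.sum_comm
            _ = ∑ c : S, ∑ i : ι, ∑ b : S, pK p K a c v * p c b i :=
                Finset.sum_comm
            _ = ∑ c : S, pK p K a c v * (∑ i : ι, ∑ b : S, p c b i) := by
                simp [Finset.mul_sum]
      _ = 1 := by
          have h1 : ∀ c : S, ∑ i : ι, ∑ b : S, p c b i = 1 := fun c =>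
            (Finset.sum_comm).trans (hstoch c)
          simp [h1, ih]

lemma LMF_key
    {S : Type*} [Fintype S] [DecidableEq S] {M n : ℕ}
    {A : Fin M → Matrix (Fin n) (Fin n) ℝ}
    {p : S → S → Fin M → ℝ}
    (hnonneg : ∀ a b i, 0 ≤ p a b i)
    (hstoch : ∀ a : S, ∑ b : S, ∑ i : Fin M, p a b i = 1)
    {ρ : ℝ} (hρ : 0 ≤ ρ)
    {f : S → (Fin n → ℝ) → ℝ}
    (hfnn : ∀ a y, 0 ≤ f a y)
    (hLMF : ∀ (a : S) (x : Fin n → ℝ),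
      ∏ i : Fin M, ∏ b : S, f b ((A i).mulVec x) ^ p a b i ≤ ρ * f a x)
    (x : Fin n → ℝ) :
    ∀ (K : ℕ) (a : S),
      ∏ w : Fin K → Fin M, ∏ b : S, f b ((Aw A K w).mulVec x) ^ pK p K a b w
        ≤ ρ ^ K * f a x := by
  intro K
  induction K with
  | zero =>
    intro a
    rw [pow_zero, one_mul]
    apply le_of_eq
    have : ∀ w : Fin 0 → Fin M, ∏ b : S, f b ((Aw A 0 w).mulVec x) ^ pK p 0 a b w
        = f a x := by
      intro w
      simp only [Aw, Matrix.one_mulVec, pK]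
      have : ∀ b : S, f b x ^ (if a = b then (1:ℝ) else 0)
          = if a = b then f b x else 1 := by
        intro b; split_ifs <;> simp
      rw [Finset.prod_congr rfl fun b _ => this b, Finset.prod_ite_eq]
      simp
    simp [this]
  | succ K ih =>
    intro a
    set y : (Fin K → Fin M) → (Fin n → ℝ) := fun v => (Aw A K v).mulVec x with hy
    have qnn : ∀ c v, 0 ≤ pK p K a c v := fun c v => pK_nonneg hnonneg K a c v
    have step1 :
        ∏ w : Fin (K+1) → Fin M, ∏ b : S,
            f b ((Aw A (K+1) w).mulVec x) ^ pK p (K+1) a b w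
          = ∏ v : Fin K → Fin M, ∏ i : Fin M, ∏ b : S,
              f b ((A i).mulVec (y v)) ^ (∑ c : S, pK p K a c v * p c b i) := by
      rw [← Equiv.prod_comp (Fin.snocEquiv (fun _ => Fin M))
        (fun w => ∏ b : S, f b ((Aw A (K+1) w).mulVec x) ^ pK p (K+1) a b w)]
      rw [Fintype.prod_prod_type]
      rw [Finset.prod_comm]
      refine Finset.prod_congr rfl fun v _ => Finset.prod_congr rfl fun i _ =>
        Finset.prod_congr rfl fun b _ => ?_
      simp only [Fin.snocEquiv, Equiv.coe_fn_mk, Aw, pK, Fin.init_snoc, Fin.snoc_last]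
      rw [← Matrix.mulVec_mulVec]
    rw [step1]
    have step2 : ∀ v : Fin K → Fin M,
        ∏ i : Fin M, ∏ b : S, f b ((A i).mulVec (y v)) ^ (∑ c : S, pK p K a c v * p c b i)
          = ∏ c : S, (∏ i : Fin M, ∏ b : S, f b ((A i).mulVec (y v)) ^ p c b i)
              ^ pK p K a c v := by
      intro v
      calc ∏ i : Fin M, ∏ b : S,
              f b ((A i).mulVec (y v)) ^ (∑ c : S, pK p K a c v * p c b i)
          = ∏ i : Fin M, ∏ b : S, ∏ c : S,
              (f b ((A i).mulVec (y v)) ^ p c b i) ^ pK p K a c v := by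
            refine Finset.prod_congr rfl fun i _ => Finset.prod_congr rfl fun b _ => ?_
            rw [Real.rpow_sum_of_nonneg (hfnn b _)
              (fun c _ => mul_nonneg (qnn c v) (hnonneg c b i))]
            refine Finset.prod_congr rfl fun c _ => ?_
            rw [mul_comm, Real.rpow_mul (hfnn b _)]
        _ = ∏ i : Fin M, ∏ c : S, ∏ b : S,
              (f b ((A i).mulVec (y v)) ^ p c b i) ^ pK p K a c v :=
            Finset.prod_congr rfl fun i _ => Finset.prod_comm
        _ = ∏ c : S, ∏ i : Fin M, ∏ b : S,
              (f b ((A i).mulVec (y v)) ^ p c b i) ^ pK p K a c v :=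
            Finset.prod_comm
        _ = ∏ c : S, (∏ i : Fin M, ∏ b : S, f b ((A i).mulVec (y v)) ^ p c b i)
              ^ pK p K a c v := by
            refine Finset.prod_congr rfl fun c _ => ?_
            rw [← Real.finset_prod_rpow _ _
              (fun i _ => Finset.prod_nonneg fun b _ => Real.rpow_nonneg (hfnn b _) _)]
            refine Finset.prod_congr rfl fun i _ => ?_
            rw [← Real.finset_prod_rpow _ _
              (fun b _ => Real.rpow_nonneg (hfnn b _) _)]
    have step3 :
        ∏ v : Fin K → Fin M, ∏ i : Fin M, ∏ b : S,
            f b ((A i).mulVec (y v)) ^ (∑ c : S, pK p K a c v * p c b i)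
          ≤ ∏ v : Fin K → Fin M, ∏ c : S, (ρ * f c (y v)) ^ pK p K a c v := by
      refine Finset.prod_le_prod (fun v _ => Finset.prod_nonneg fun i _ =>
        Finset.prod_nonneg fun b _ => Real.rpow_nonneg (hfnn b _) _) fun v _ => ?_
      rw [step2 v]
      refine Finset.prod_le_prod (fun c _ => Real.rpow_nonneg
        (Finset.prod_nonneg fun i _ => Finset.prod_nonneg fun b _ =>
          Real.rpow_nonneg (hfnn b _) _) _) fun c _ => ?_
      exact Real.rpow_le_rpow (Finset.prod_nonneg fun i _ => Finset.prod_nonneg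
        fun b _ => Real.rpow_nonneg (hfnn b _) _) (hLMF c (y v)) (qnn c v)
    refine step3.trans ?_
    have step4 :
        ∏ v : Fin K → Fin M, ∏ c : S, (ρ * f c (y v)) ^ pK p K a c v
          = ρ * ∏ v : Fin K → Fin M, ∏ c : S, f c (y v) ^ pK p K a c v := by
      calc ∏ v : Fin K → Fin M, ∏ c : S, (ρ * f c (y v)) ^ pK p K a c v
          = ∏ v : Fin K → Fin M, ∏ c : S,
              ρ ^ pK p K a c v * f c (y v) ^ pK p K a c v := by
            refine Finset.prod_congr rfl fun v _ => Finset.prod_congr rfl fun c _ =>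
              Real.mul_rpow hρ (hfnn c _)
        _ = (∏ v : Fin K → Fin M, ∏ c : S, ρ ^ pK p K a c v)
            * ∏ v : Fin K → Fin M, ∏ c : S, f c (y v) ^ pK p K a c v := by
            rw [← Finset.prod_mul_distrib]
            exact Finset.prod_congr rfl fun v _ => Finset.prod_mul_distrib
        _ = ρ * ∏ v : Fin K → Fin M, ∏ c : S, f c (y v) ^ pK p K a c v := by
            congr 1
            have : ∏ v : Fin K → Fin M, ∏ c : S, ρ ^ pK p K a c v
                = ρ ^ (∑ v : Fin K → Fin M, ∑ c : S, pK p K a c v) := by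
              rw [Real.rpow_sum_of_nonneg hρ
                (fun v _ => Finset.sum_nonneg fun c _ => qnn c v)]
              exact Finset.prod_congr rfl fun v _ =>
                (Real.rpow_sum_of_nonneg hρ (fun c _ => qnn c v)).symm
            rw [this, pK_sum hstoch K a, Real.rpow_one]
    rw [step4]
    calc ρ * ∏ v : Fin K → Fin M, ∏ c : S, f c (y v) ^ pK p K a c v
        ≤ ρ * (ρ ^ K * f a x) := mul_le_mul_of_nonneg_left (ih a) hρ
      _ = ρ ^ (K+1) * f a x := by ring

/-- a Lyapunov multi-function for `(A, G)` w.r.t. `ρ` is a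
Lyapunov multi-function for the K-step lift w.r.t. `ρ^K`.  `x ^ r` for real
`r` denotes `Real.rpow`. -/
theorem LMF_step_lift
    {S : Type*} [Fintype S] [DecidableEq S] (M n : ℕ)
    (A : Fin M → Matrix (Fin n) (Fin n) ℝ)
    (p : S → S → Fin M → ℝ)
    (hnonneg : ∀ a b i, 0 ≤ p a b i)
    (hstoch : ∀ a : S, ∑ b : S, ∑ i : Fin M, p a b i = 1)
    (ρ : ℝ) (hρ : 0 ≤ ρ)
    (f : S → (Fin n → ℝ) → ℝ)
    (hcont : ∀ a, Continuous (f a))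
    (hpos : ∀ a x, x ≠ 0 → 0 < f a x) (hzero : ∀ a, f a 0 = 0)
    (hhom : ∀ a (c : ℝ) x, 0 ≤ c → f a (c • x) = c * f a x)
    (hLMF : ∀ (a : S) (x : Fin n → ℝ),
      ∏ i : Fin M, ∏ b : S, f b ((A i).mulVec x) ^ p a b i ≤ ρ * f a x)
    (K : ℕ) (hK : 1 ≤ K) (a : S) (x : Fin n → ℝ) :
    ∏ w : Fin K → Fin M, ∏ b : S, f b ((Aw A K w).mulVec x) ^ pK p K a b w
      ≤ ρ ^ K * f a x := by
  have hfnn : ∀ b y, 0 ≤ f b y := by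
    intro b y
    by_cases h : y = 0
    · simp [h, hzero]
    · exact (hpos b y h).le
  exact LMF_key hnonneg hstoch hρ hfnn hLMF x K a
end
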